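/- Let Q be a finite bipartite quiver with Q₀ = L ⊔ R and let F be a Q-shaped diagram of posets, i.e. F assigns to each vertex v a partially ordered set F(v) (regarded as a category) and to each arrow α : l → r a monotone map F(α) : F(l) → F(r). Then every Hom-set of the contravariant Grothendieck construction ∫_contra F has at most one element (equivalently, ∫_contra F is a poset) if and only if for every pair of distinct parallel arrows α, β : l → r in Q and every element x ∈ F(l), the elements F(α)(x) and F(β)(x) have no common lower bound in F(r). -/

import Mathlib

/-!
STATEMENT 12: For a finite bipartite quiver `Q` with `Q₀ = L ⊔ R` and a `Q`-shaped diagram `F`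
of posets, every Hom-set of the contravariant Grothendieck construction `∫_contra F` has at
most one element if and only if for every pair of distinct parallel arrows `α, β : l → r` of
`Q` and every `x ∈ F(l)`, the elements `F(α)(x)` and `F(β)(x)` have no common lower bound in
`F(r)`.
-/

open CategoryTheory

universe u

namespace BGP

variable {L R : Type u}

/-- The vertex set of the bipartite quiver, tagged with the arrow data. -/
def BipVert (_Arr : L → R → Type u) : Type u := L ⊕ R

/-- Hom types of the bipartite quiver: all arrows go from `L` to `R`. -/
def bipHom (Arr : L → R → Type u) : L ⊕ R → L ⊕ R → Type u
  | Sum.inl l, Sum.inr r => Arr l r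
  | _, _ => PEmpty

instance (Arr : L → R → Type u) : Quiver.{u} (BipVert Arr) :=
  ⟨fun a b => bipHom Arr a b⟩

variable (Arr : L → R → Type u) (FL : L → Cat.{u, u}) (FR : R → Cat.{u, u})

/-- The fibrewise-opposite of the `Q`-shaped diagram of small categories. -/
def bipPrefunctorOp (Fmap : ∀ ⦃l : L⦄ ⦃r : R⦄, Arr l r → (FL l ⟶ FR r)) :
    Prefunctor (BipVert Arr) Cat.{u, u} where
  obj v := match v with
    | Sum.inl l => Cat.of (FL l)ᵒᵖ
    | Sum.inr r => Cat.of (FR r)ᵒᵖ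
  map {v w} a := match v, w, a with
    | Sum.inl _, Sum.inr _, a => (Functor.op (Fmap a).toFunctor).toCatHom
    | Sum.inl _, Sum.inl _, a => a.elim
    | Sum.inr _, Sum.inl _, a => a.elim
    | Sum.inr _, Sum.inr _, a => a.elim

/-- The contravariant Grothendieck construction `∫_contra F`: objects are pairs `(v, x)` with
`v ∈ Q₀` and `x ∈ F(v)`; morphisms `(v, x) → (v, x')` are morphisms `x → x'` in `F(v)`, and
morphisms `(r, y) → (l, x)` are pairs `(α : l → r, y → F(α)(x))`. It is realised as the
opposite of the covariant Grothendieck construction of the fibrewise-opposite diagram. -/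
abbrev ContraGroth (Fmap : ∀ ⦃l : L⦄ ⦃r : R⦄, Arr l r → (FL l ⟶ FR r)) : Type u :=
  (Grothendieck (Paths.lift (bipPrefunctorOp Arr FL FR Fmap)))ᵒᵖ

variable {Arr} in
/-- A `Q`-shaped diagram of posets, regarded as a diagram of small categories: the fibre over a
vertex `v` is the poset `F(v)` regarded as a category, and the monotone map `F(α)` attached to
an arrow `α : l → r` is regarded as a functor. -/
def posetDiagram {PL : L → Type u} [∀ l, PartialOrder (PL l)]
    {PR : R → Type u} [∀ r, PartialOrder (PR r)]
    (Fmap : ∀ ⦃l : L⦄ ⦃r : R⦄, Arr l r → (PL l →o PR r)) :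
    ∀ ⦃l : L⦄ ⦃r : R⦄, Arr l r → (Cat.of (PL l) ⟶ Cat.of (PR r)) :=
  fun _ _ α => (Fmap α).monotone.functor.toCatHom

end BGP


namespace BGP

variable {L R : Type u} {Arr : L → R → Type u}

/-- Embedding of `L` into the vertex set, with good elaboration behaviour. -/
def vl (Arr : L → R → Type u) (l : L) : BipVert Arr := Sum.inl l

/-- Embedding of `R` into the vertex set, with good elaboration behaviour. -/
def vr (Arr : L → R → Type u) (r : R) : BipVert Arr := Sum.inr r

lemma elim_hom_to_inl {v : BipVert Arr} {l : L} (e : v ⟶ vl Arr l) : False := by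
  cases v <;> exact PEmpty.elim e

lemma elim_hom_from_inr {r : R} {v : BipVert Arr} (e : vr Arr r ⟶ v) : False := by
  cases v <;> exact PEmpty.elim e

instance path_to_inl_sub {v : BipVert Arr} {l : L} :
    Subsingleton (Quiver.Path v (vl Arr l)) := by
  constructor
  intro p q
  cases p with
  | nil =>
    cases q with
    | nil => rfl
    | cons q' e => exact (elim_hom_to_inl e).elim
  | cons p' e => exact (elim_hom_to_inl e).elim

lemma elim_path_inr_inl {r : R} {l : L} (p : Quiver.Path (vr Arr r) (vl Arr l)) : False := by
  cases p with
  | cons p' e => exact (elim_hom_to_inl e)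

instance path_from_inr_sub {r : R} {w : BipVert Arr} :
    Subsingleton (Quiver.Path (vr Arr r) w) := by
  constructor
  have key : ∀ (_ : Quiver.Path (vr Arr r) w), w = vr Arr r := by
    intro p
    cases p with
    | nil => rfl
    | cons p' e =>
      rename_i b
      cases b with
      | inl l => exact (elim_path_inr_inl p').elim
      | inr r' => exact (elim_hom_from_inr e).elim
  intro p q
  have hw := key p
  subst hw
  cases p with
  | nil =>
    cases q with
    | nil => rfl
    | cons q' e =>
      rename_i b
      cases b with
      | inl l => exact (elim_path_inr_inl q').elim
      | inr r' => exact (elim_hom_from_inr e).elim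
  | cons p' e =>
    rename_i b
    cases b with
    | inl l => exact (elim_path_inr_inl p').elim
    | inr r' => exact (elim_hom_from_inr e).elim

lemma path_inl_inr {l : L} {r : R} (p : Quiver.Path (vl Arr l) (vr Arr r)) :
    ∃ α : Arr l r, p = (Quiver.Path.nil.cons α : Quiver.Path (vl Arr l) (vr Arr r)) := by
  cases p with
  | cons p' e =>
    rename_i b
    cases b with
    | inr r' => exact PEmpty.elim e
    | inl l' =>
      cases p' with
      | nil => exact ⟨e, rfl⟩
      | cons p'' e' => exact (elim_hom_to_inl e').elim

instance op_hom_sub {P : Type u} [Preorder P] (a b : Pᵒᵖ) : Subsingleton (a ⟶ b) :=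
  ⟨fun f g => congrArg Quiver.Hom.op (Subsingleton.elim f.unop g.unop)⟩

end BGP

section aux
open BGP

variable {L R : Type u}
    (Arr : L → R → Type u)
    (PL : L → Type u) [∀ l, PartialOrder (PL l)]
    (PR : R → Type u) [∀ r, PartialOrder (PR r)]
    (Fmap : ∀ ⦃l : L⦄ ⦃r : R⦄, Arr l r → (PL l →o PR r))

theorem groth_hom_sub
    (h : ∀ (l : L) (r : R) (α β : Arr l r), α ≠ β → ∀ x : PL l,
        ¬∃ y : PR r, y ≤ Fmap α x ∧ y ≤ Fmap β x)
    (X Y : Grothendieck (Paths.lift (bipPrefunctorOp Arr (fun l => Cat.of (PL l))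
      (fun r => Cat.of (PR r)) (posetDiagram Fmap)))) :
    Subsingleton (X ⟶ Y) := by
  obtain ⟨xb, xf⟩ := X
  obtain ⟨yb, yf⟩ := Y
  cases xb with
  | inr r =>
    constructor
    intro f g
    have hb : f.base = g.base := (path_from_inr_sub (r := r) (w := yb)).allEq _ _
    cases yb with
    | inl l' => exact Grothendieck.ext f g hb ((op_hom_sub (P := PL l') _ _).allEq _ _)
    | inr r' => exact Grothendieck.ext f g hb ((op_hom_sub (P := PR r') _ _).allEq _ _)
  | inl l =>
    cases yb with
    | inl l' =>
      constructor
      intro f g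
      have hb : f.base = g.base := (path_to_inl_sub (v := vl Arr l) (l := l')).allEq _ _
      exact Grothendieck.ext f g hb ((op_hom_sub (P := PL l') _ _).allEq _ _)
    | inr r =>
      constructor
      intro f g
      obtain ⟨fb, ff⟩ := f
      obtain ⟨gb, gf⟩ := g
      obtain ⟨α, rfl⟩ := path_inl_inr fb
      obtain ⟨β, rfl⟩ := path_inl_inr gb
      have hα : (show PR r from yf.unop) ≤ Fmap α (show PL l from xf.unop) :=
        @leOfHom (PR r) _ _ _ ff.unop
      have hβ : (show PR r from yf.unop) ≤ Fmap β (show PL l from xf.unop) :=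
        @leOfHom (PR r) _ _ _ gf.unop
      have hab : α = β := by
        by_contra hne
        exact h l r α β hne _ ⟨_, hα, hβ⟩
      subst hab
      exact Grothendieck.ext _ _ rfl ((op_hom_sub (P := PR r) _ _).allEq _ _)

end aux

open BGP

/-- For a finite bipartite quiver `Q` with `Q₀ = L ⊔ R` and a `Q`-shaped diagram of posets `F`,
every Hom-set of `∫_contra F` has at most one element (i.e. `∫_contra F` is a poset) if and
only if for all distinct parallel arrows `α, β : l → r` of `Q` and every `x ∈ F(l)`, the
elements `F(α)(x)` and `F(β)(x)` have no common lower bound in `F(r)`. -/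
theorem contraGroth_poset_iff_no_common_lower_bound
    {L R : Type u} [Fintype L] [Fintype R]
    (Arr : L → R → Type u) [∀ l r, Fintype (Arr l r)]
    (PL : L → Type u) [∀ l, PartialOrder (PL l)]
    (PR : R → Type u) [∀ r, PartialOrder (PR r)]
    (Fmap : ∀ ⦃l : L⦄ ⦃r : R⦄, Arr l r → (PL l →o PR r)) :
    (∀ a b : ContraGroth Arr (fun l => Cat.of (PL l)) (fun r => Cat.of (PR r))
        (posetDiagram Fmap), Subsingleton (a ⟶ b)) ↔
      (∀ (l : L) (r : R) (α β : Arr l r), α ≠ β → ∀ x : PL l,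
        ¬∃ y : PR r, y ≤ Fmap α x ∧ y ≤ Fmap β x) := by
  constructor
  · intro h l r α β hne x hy
    obtain ⟨y, h1, h2⟩ := hy
    let X : Grothendieck (Paths.lift (bipPrefunctorOp Arr (fun l => Cat.of (PL l))
        (fun r => Cat.of (PR r)) (posetDiagram Fmap))) := ⟨vl Arr l, Opposite.op x⟩
    let Y : Grothendieck (Paths.lift (bipPrefunctorOp Arr (fun l => Cat.of (PL l))
        (fun r => Cat.of (PR r)) (posetDiagram Fmap))) := ⟨vr Arr r, Opposite.op y⟩
    let f : X ⟶ Y := ⟨Quiver.Path.nil.cons α, (homOfLE h1).op⟩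
    let g : X ⟶ Y := ⟨Quiver.Path.nil.cons β, (homOfLE h2).op⟩
    have hsub := h (Opposite.op Y) (Opposite.op X)
    have heq : f.op = g.op := Subsingleton.elim _ _
    have heq2 : f = g := Quiver.Hom.op_inj heq
    have hbase : (Quiver.Path.nil.cons α : Quiver.Path (vl Arr l) (vr Arr r))
        = Quiver.Path.nil.cons β := congrArg Grothendieck.Hom.base heq2
    apply hne
    injection hbase
  · intro h a b
    constructor
    intro f g
    have hs := groth_hom_sub Arr PL PR Fmap h b.unop a.unop
    exact Quiver.Hom.unop_inj (hs.elim f.unop g.unop)
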